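/- There exists an absolute constant C > 0 such that the following holds. Let q be a prime power, let A be a multiplicative subgroup of F_q^* with |A| ≥ q^{2/3}, and let σ : F_q → ℝ be defined by σ(x) = q/|A| if x ∈ A and σ(x) = 0 otherwise. Then for all functions f₁, f₂, f₃, f₄ : F_q² → [−1, 1], |N(f₁, f₂, f₃, f₄)| ≤ min_{1 ≤ j ≤ 4} ‖f_j‖_□ + C·q^{1/8}/|A|^{1/4}. -/

import Mathlib

/-- `M(f₁, f₂, f₃, f₄) = q⁻⁴ Σ_{a,b,c,d} f₁(a,c) f₂(a,d) f₃(b,c) f₄(b,d)`. -/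
noncomputable def Mform {F : Type} [Fintype F] (f₁ f₂ f₃ f₄ : F × F → ℝ) : ℝ :=
  (∑ a : F, ∑ b : F, ∑ c : F, ∑ d : F,
    f₁ (a, c) * f₂ (a, d) * f₃ (b, c) * f₄ (b, d)) / (Fintype.card F : ℝ) ^ 4

/-- The box norm `‖f‖_□ = M(f, f, f, f)^{1/4}`. -/
noncomputable def boxNorm {F : Type} [Fintype F] (f : F × F → ℝ) : ℝ :=
  (Mform f f f f) ^ ((1 : ℝ) / 4)

/-- `N(f₁, f₂, f₃, f₄) = q⁻⁴ Σ_{a,b,c,d} f₁(a,c) f₂(a,d) f₃(b,c) f₄(b,d) σ(a−b) σ(c−d)`. -/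
noncomputable def Nform {F : Type} [Field F] [Fintype F]
    (f₁ f₂ f₃ f₄ : F × F → ℝ) (σ : F → ℝ) : ℝ :=
  (∑ a : F, ∑ b : F, ∑ c : F, ∑ d : F,
    f₁ (a, c) * f₂ (a, d) * f₃ (b, c) * f₄ (b, d) * σ (a - b) * σ (c - d)) /
    (Fintype.card F : ℝ) ^ 4

set_option linter.unusedSectionVars false

variable {F : Type} [Fintype F]

lemma sum4_swap {M : Type*} [AddCommMonoid M] (X : F → F → F → F → M) :
    ∑ a : F, ∑ b : F, ∑ c : F, ∑ d : F, X a b c d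
      = ∑ c : F, ∑ d : F, ∑ a : F, ∑ b : F, X a b c d := by
  rw [← Fintype.sum_prod_type']
  have h : ∀ p : F × F, ∑ c : F, ∑ d : F, X p.1 p.2 c d
      = ∑ q : F × F, X p.1 p.2 q.1 q.2 := fun p => (Fintype.sum_prod_type' ..).symm
  simp_rw [h]
  rw [Finset.sum_comm]
  have h2 : ∀ p : F × F, ∑ x : F × F, X x.1 x.2 p.1 p.2
      = ∑ a : F, ∑ b : F, X a b p.1 p.2 :=
    fun p => Fintype.sum_prod_type' (f := fun a b => X a b p.1 p.2)
  simp_rw [h2]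
  exact Fintype.sum_prod_type' (f := fun c d => ∑ a : F, ∑ b : F, X a b c d)

/-- Unnormalized box-form sum -/
noncomputable def Sform (f₁ f₂ f₃ f₄ : F × F → ℝ) : ℝ :=
  ∑ a : F, ∑ b : F, ∑ c : F, ∑ d : F, f₁ (a, c) * f₂ (a, d) * f₃ (b, c) * f₄ (b, d)

lemma Sform_factor1 (f₁ f₂ f₃ f₄ : F × F → ℝ) :
    Sform f₁ f₂ f₃ f₄ = ∑ p : F × F,
      (∑ a : F, f₁ (a, p.1) * f₂ (a, p.2)) * (∑ b : F, f₃ (b, p.1) * f₄ (b, p.2)) := by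
  unfold Sform
  rw [sum4_swap]
  rw [← Fintype.sum_prod_type'
    (f := fun c d => ∑ a : F, ∑ b : F, f₁ (a, c) * f₂ (a, d) * f₃ (b, c) * f₄ (b, d))]
  refine Finset.sum_congr rfl fun p _ => ?_
  rw [Finset.sum_mul_sum]
  exact Finset.sum_congr rfl fun a _ => Finset.sum_congr rfl fun b _ => by ring

lemma Sform_factor2 (f₁ f₂ f₃ f₄ : F × F → ℝ) :
    Sform f₁ f₂ f₃ f₄ = ∑ p : F × F,
      (∑ c : F, f₁ (p.1, c) * f₃ (p.2, c)) * (∑ d : F, f₂ (p.1, d) * f₄ (p.2, d)) := by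
  unfold Sform
  rw [← Fintype.sum_prod_type'
    (f := fun a b => ∑ c : F, ∑ d : F, f₁ (a, c) * f₂ (a, d) * f₃ (b, c) * f₄ (b, d))]
  refine Finset.sum_congr rfl fun p _ => ?_
  rw [Finset.sum_mul_sum]
  exact Finset.sum_congr rfl fun c _ => Finset.sum_congr rfl fun d _ => by ring

lemma Sform_self_nonneg (f : F × F → ℝ) : 0 ≤ Sform f f f f := by
  rw [Sform_factor1]
  exact Finset.sum_nonneg fun p _ => mul_self_nonneg _

lemma Sform_sq_le1 (f₁ f₂ f₃ f₄ : F × F → ℝ) :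
    (Sform f₁ f₂ f₃ f₄) ^ 2 ≤ Sform f₁ f₂ f₁ f₂ * Sform f₃ f₄ f₃ f₄ := by
  rw [Sform_factor1, Sform_factor1 f₁ f₂ f₁ f₂, Sform_factor1 f₃ f₄ f₃ f₄]
  have := Finset.sum_mul_sq_le_sq_mul_sq Finset.univ
    (fun p : F × F => ∑ a : F, f₁ (a, p.1) * f₂ (a, p.2))
    (fun p : F × F => ∑ b : F, f₃ (b, p.1) * f₄ (b, p.2))
  simpa [sq] using this

lemma Sform_sq_le2 (f₁ f₂ : F × F → ℝ) :
    (Sform f₁ f₂ f₁ f₂) ^ 2 ≤ Sform f₁ f₁ f₁ f₁ * Sform f₂ f₂ f₂ f₂ := by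
  rw [Sform_factor2 f₁ f₂ f₁ f₂, Sform_factor2 f₁ f₁ f₁ f₁, Sform_factor2 f₂ f₂ f₂ f₂]
  have := Finset.sum_mul_sq_le_sq_mul_sq Finset.univ
    (fun p : F × F => ∑ c : F, f₁ (p.1, c) * f₁ (p.2, c))
    (fun p : F × F => ∑ d : F, f₂ (p.1, d) * f₂ (p.2, d))
  simpa [sq] using this

lemma Sform_pow4 (f₁ f₂ f₃ f₄ : F × F → ℝ) :
    (Sform f₁ f₂ f₃ f₄) ^ 4 ≤
      Sform f₁ f₁ f₁ f₁ * Sform f₂ f₂ f₂ f₂ * Sform f₃ f₃ f₃ f₃ * Sform f₄ f₄ f₄ f₄ := by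
  have h1 := Sform_sq_le1 f₁ f₂ f₃ f₄
  have h2 := Sform_sq_le2 f₁ f₂
  have h3 := Sform_sq_le2 f₃ f₄
  have e : (Sform f₁ f₂ f₃ f₄) ^ 4 = ((Sform f₁ f₂ f₃ f₄) ^ 2) ^ 2 := by ring
  rw [e]
  calc ((Sform f₁ f₂ f₃ f₄) ^ 2) ^ 2 ≤ (Sform f₁ f₂ f₁ f₂ * Sform f₃ f₄ f₃ f₄) ^ 2 :=
        pow_le_pow_left₀ (sq_nonneg _) h1 2
    _ = (Sform f₁ f₂ f₁ f₂) ^ 2 * (Sform f₃ f₄ f₃ f₄) ^ 2 := by ring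
    _ ≤ (Sform f₁ f₁ f₁ f₁ * Sform f₂ f₂ f₂ f₂) * (Sform f₃ f₃ f₃ f₃ * Sform f₄ f₄ f₄ f₄) :=
        mul_le_mul h2 h3 (sq_nonneg _) (mul_nonneg (Sform_self_nonneg _) (Sform_self_nonneg _))
    _ = _ := by ring

lemma Mform_eq_Sform (f₁ f₂ f₃ f₄ : F × F → ℝ) :
    Mform f₁ f₂ f₃ f₄ = Sform f₁ f₂ f₃ f₄ / (Fintype.card F : ℝ) ^ 4 := rfl

lemma Mform_self_nonneg (f : F × F → ℝ) : 0 ≤ Mform f f f f := by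
  rw [Mform_eq_Sform]
  exact div_nonneg (Sform_self_nonneg f) (by positivity)

lemma boxNorm_nonneg (f : F × F → ℝ) : 0 ≤ boxNorm f := Real.rpow_nonneg (Mform_self_nonneg f) _

lemma abs_Mform_le (hF : 0 < Fintype.card F) (f₁ f₂ f₃ f₄ : F × F → ℝ) :
    |Mform f₁ f₂ f₃ f₄| ≤ boxNorm f₁ * boxNorm f₂ * boxNorm f₃ * boxNorm f₄ := by
  have hq : (0:ℝ) < (Fintype.card F : ℝ) ^ 4 := by positivity
  have h1 := Mform_self_nonneg f₁
  have h2 := Mform_self_nonneg f₂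
  have h3 := Mform_self_nonneg f₃
  have h4 := Mform_self_nonneg f₄
  have key : |Mform f₁ f₂ f₃ f₄| ^ (4:ℕ) ≤
      Mform f₁ f₁ f₁ f₁ * Mform f₂ f₂ f₂ f₂ * Mform f₃ f₃ f₃ f₃ * Mform f₄ f₄ f₄ f₄ := by
    have habs : |Mform f₁ f₂ f₃ f₄| ^ (4:ℕ) = (Mform f₁ f₂ f₃ f₄) ^ (4:ℕ) := by
      rw [← abs_pow]
      exact abs_of_nonneg (by positivity)
    rw [habs]
    calc (Mform f₁ f₂ f₃ f₄) ^ (4:ℕ) = (Sform f₁ f₂ f₃ f₄) ^ 4 / ((Fintype.card F : ℝ) ^ 4) ^ 4 := by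
          rw [Mform_eq_Sform, div_pow]
      _ ≤ (Sform f₁ f₁ f₁ f₁ * Sform f₂ f₂ f₂ f₂ * Sform f₃ f₃ f₃ f₃ * Sform f₄ f₄ f₄ f₄) /
            ((Fintype.card F : ℝ) ^ 4) ^ 4 :=
          (div_le_div_iff_of_pos_right (by positivity)).2 (Sform_pow4 f₁ f₂ f₃ f₄)
      _ = _ := by
          simp only [Mform_eq_Sform, div_mul_div_comm]
          ring_nf
  have hstep : |Mform f₁ f₂ f₃ f₄| = (|Mform f₁ f₂ f₃ f₄| ^ (4:ℕ)) ^ ((1:ℝ)/4) := by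
    rw [← Real.rpow_natCast |Mform f₁ f₂ f₃ f₄| 4, ← Real.rpow_mul (abs_nonneg _)]
    norm_num
  have hrhs : boxNorm f₁ * boxNorm f₂ * boxNorm f₃ * boxNorm f₄ =
      (Mform f₁ f₁ f₁ f₁ * Mform f₂ f₂ f₂ f₂ * Mform f₃ f₃ f₃ f₃ * Mform f₄ f₄ f₄ f₄)
        ^ ((1:ℝ)/4) := by
    unfold boxNorm
    rw [← Real.mul_rpow h1 h2, ← Real.mul_rpow (mul_nonneg h1 h2) h3,
      ← Real.mul_rpow (mul_nonneg (mul_nonneg h1 h2) h3) h4]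
  rw [hstep, hrhs]
  exact Real.rpow_le_rpow (by positivity) key (by norm_num)

lemma boxNorm_le_one (f : F × F → ℝ) (hf : ∀ x, f x ∈ Set.Icc (-1:ℝ) 1) :
    boxNorm f ≤ 1 := by
  have hb : ∀ x, |f x| ≤ 1 := fun x => abs_le.2 ⟨(hf x).1, (hf x).2⟩
  have hM : Mform f f f f ≤ 1 := by
    rw [Mform_eq_Sform]
    rcases Nat.eq_zero_or_pos (Fintype.card F) with h0 | hpos
    · simp [h0]
    have hb4 : ∀ a b c d : F, f (a, c) * f (a, d) * f (b, c) * f (b, d) ≤ 1 := by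
      intro a b c d
      have habs : |f (a, c) * f (a, d) * f (b, c) * f (b, d)|
          = |f (a, c)| * |f (a, d)| * |f (b, c)| * |f (b, d)| := by
        rw [abs_mul, abs_mul, abs_mul]
      have hle : |f (a, c)| * |f (a, d)| * |f (b, c)| * |f (b, d)| ≤ 1 := by
        have p1 : |f (a, c)| * |f (a, d)| ≤ 1 := mul_le_one₀ (hb _) (abs_nonneg _) (hb _)
        have p2 : |f (a, c)| * |f (a, d)| * |f (b, c)| ≤ 1 :=
          mul_le_one₀ p1 (abs_nonneg _) (hb _)
        exact mul_le_one₀ p2 (abs_nonneg _) (hb _)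
      exact (le_abs_self _).trans (habs ▸ hle)
    have h' : Sform f f f f ≤ ∑ _a : F, ∑ _b : F, ∑ _c : F, ∑ _d : F, (1:ℝ) := by
      refine Finset.sum_le_sum fun a _ => ?_
      refine Finset.sum_le_sum fun b _ => ?_
      refine Finset.sum_le_sum fun c _ => ?_
      exact Finset.sum_le_sum fun d _ => hb4 a b c d
    have hone : (∑ _a : F, ∑ _b : F, ∑ _c : F, ∑ _d : F, (1:ℝ)) = (Fintype.card F : ℝ) ^ 4 := by
      simp
      ring
    have hq : (0:ℝ) < (Fintype.card F : ℝ) ^ 4 := by positivity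
    rw [div_le_one hq]
    exact h'.trans hone.le
  exact Real.rpow_le_one (Mform_self_nonneg f) hM (by norm_num)

variable {F : Type} [Field F] [Fintype F] [DecidableEq F]

lemma exists_char (F : Type) [Field F] [Fintype F] [DecidableEq F] :
    ∃ ψ : AddChar F ℂ, ∀ b : F,
      ∑ x : F, ψ (x * b) = if b = 0 then (Fintype.card F : ℂ) else 0 := by
  refine ⟨AddChar.FiniteField.primitiveChar_to_Complex F, fun b => ?_⟩
  simpa using AddChar.sum_mulShift b
    (AddChar.FiniteField.primitiveChar_to_Complex_isPrimitive F)

lemma parseval (ψ : AddChar F ℂ)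
    (hψ : ∀ b : F, ∑ x : F, ψ (x * b) = if b = 0 then (Fintype.card F : ℂ) else 0)
    (e : F → F) (he : Function.Injective e) (g : F → ℂ) :
    ∑ ξ : F, ‖∑ a : F, g a * ψ (ξ * e a)‖ ^ 2
      = (Fintype.card F : ℝ) * ∑ a : F, ‖g a‖ ^ 2 := by
  have key : ∑ ξ : F, (∑ a : F, g a * ψ (ξ * e a)) * (starRingEnd ℂ) (∑ a : F, g a * ψ (ξ * e a))
      = (Fintype.card F : ℂ) * ∑ a : F, g a * (starRingEnd ℂ) (g a) := by
    have expand : ∀ ξ : F,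
        (∑ a : F, g a * ψ (ξ * e a)) * (starRingEnd ℂ) (∑ a : F, g a * ψ (ξ * e a))
        = ∑ a : F, ∑ a' : F,
            g a * (starRingEnd ℂ) (g a') * ψ (ξ * (e a - e a')) := by
      intro ξ
      rw [map_sum, Finset.sum_mul_sum]
      refine Finset.sum_congr rfl fun a _ => Finset.sum_congr rfl fun a' _ => ?_
      rw [(starRingEnd ℂ).map_mul, ← AddChar.map_neg_eq_conj]
      have harg : ψ (ξ * e a) * ψ (-(ξ * e a')) = ψ (ξ * (e a - e a')) := by
        rw [← AddChar.map_add_eq_mul]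
        congr 1
        ring
      calc g a * ψ (ξ * e a) * ((starRingEnd ℂ) (g a') * ψ (-(ξ * e a')))
          = g a * (starRingEnd ℂ) (g a') * (ψ (ξ * e a) * ψ (-(ξ * e a'))) := by ring
        _ = _ := by rw [harg]
    simp_rw [expand]
    rw [Finset.sum_comm]
    rw [Finset.sum_congr rfl fun a (_ : a ∈ Finset.univ) =>
      (Finset.sum_comm (s := Finset.univ) (t := Finset.univ)
        (f := fun ξ a' => g a * (starRingEnd ℂ) (g a') * ψ (ξ * (e a - e a'))))]
    have inner : ∀ a : F, ∑ a' : F, ∑ ξ : F, g a * (starRingEnd ℂ) (g a') * ψ (ξ * (e a - e a'))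
        = (Fintype.card F : ℂ) * (g a * (starRingEnd ℂ) (g a)) := by
      intro a
      have swap : ∀ a' : F, ∑ ξ : F, g a * (starRingEnd ℂ) (g a') * ψ (ξ * (e a - e a'))
          = g a * (starRingEnd ℂ) (g a') *
              (if e a - e a' = 0 then (Fintype.card F : ℂ) else 0) := by
        intro a'
        rw [← hψ (e a - e a'), Finset.mul_sum]
      have iff' : ∀ a' : F, (g a * (starRingEnd ℂ) (g a') *
              (if e a - e a' = 0 then (Fintype.card F : ℂ) else 0))
          = if a' = a then g a * (starRingEnd ℂ) (g a') * (Fintype.card F : ℂ) else 0 := by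
        intro a'
        by_cases h : a' = a
        · simp [h]
        · rw [if_neg h, if_neg, mul_zero]
          rw [sub_eq_zero]
          exact fun hh => h (he hh).symm
      simp_rw [swap, iff']
      rw [Finset.sum_ite_eq' Finset.univ a
        (fun a' => g a * (starRingEnd ℂ) (g a') * (Fintype.card F : ℂ))]
      simp only [Finset.mem_univ, if_true]
      ring
    simp_rw [inner]
    rw [← Finset.mul_sum]
  have cast1 : ∀ z : ℂ, z * (starRingEnd ℂ) z = ((‖z‖ ^ 2 : ℝ) : ℂ) := by
    intro z
    rw [Complex.mul_conj]
    norm_cast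
    rw [Complex.normSq_eq_norm_sq]
  simp_rw [cast1] at key
  rw [← Complex.ofReal_sum, ← Complex.ofReal_sum] at key
  exact_mod_cast key

lemma gauss_bound (ψ : AddChar F ℂ)
    (hψ : ∀ b : F, ∑ x : F, ψ (x * b) = if b = 0 then (Fintype.card F : ℂ) else 0)
    (T : Finset F) (hT0 : (0:F) ∉ T) (hTne : T.Nonempty)
    (hTmul : ∀ t ∈ T, Finset.image (fun a => t * a) T = T)
    (ξ : F) (hξ : ξ ≠ 0) :
    ‖∑ a ∈ T, ψ (ξ * a)‖ ^ 2 ≤ (Fintype.card F : ℝ) := by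
  set Sig : F → ℂ := fun u => ∑ a ∈ T, ψ (u * a) with hSig
  -- invariance
  have hinv : ∀ t ∈ T, ∀ u : F, Sig (u * t) = Sig u := by
    intro t ht u
    have htne : t ≠ 0 := fun h => hT0 (h ▸ ht)
    have hinj : Set.InjOn (fun a => t * a) T := fun x _ y _ hxy => by
      simpa [htne] using mul_left_cancel₀ htne hxy
    calc Sig (u * t) = ∑ a ∈ T, ψ (u * (t * a)) := by
          refine Finset.sum_congr rfl fun a _ => ?_
          congr 1
          ring
      _ = ∑ b ∈ Finset.image (fun a => t * a) T, ψ (u * b) := by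
          rw [Finset.sum_image hinj]
      _ = Sig u := by rw [hTmul t ht]
  -- total mass
  have htotal : ∑ u : F, ‖Sig u‖ ^ 2 = (Fintype.card F : ℝ) * T.card := by
    have := parseval ψ hψ id Function.injective_id (fun a => if a ∈ T then (1:ℂ) else 0)
    simp only [id] at this
    have h1 : ∀ u : F, ∑ a : F, (if a ∈ T then (1:ℂ) else 0) * ψ (u * a) = Sig u := by
      intro u
      rw [hSig]
      simp only [ite_mul, one_mul, zero_mul]
      rw [Finset.sum_ite_mem, Finset.univ_inter]
    have h2 : ∑ a : F, ‖if a ∈ T then (1:ℂ) else 0‖ ^ 2 = (T.card : ℝ) := by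
      have hpt : ∀ a : F, ‖if a ∈ T then (1:ℂ) else 0‖ ^ 2 = if a ∈ T then (1:ℝ) else 0 := by
        intro a; by_cases h : a ∈ T <;> simp [h]
      simp_rw [hpt]
      rw [Finset.sum_ite_mem, Finset.univ_inter]
      simp
    rw [Finset.sum_congr rfl fun u _ => by rw [h1 u]] at this
    rw [h2] at this
    exact this
  -- averaging
  have havg : (T.card : ℝ) * ‖Sig ξ‖ ^ 2 ≤ (Fintype.card F : ℝ) * T.card := by
    have hTsum : ∑ t ∈ T, ‖Sig (ξ * t)‖ ^ 2 = (T.card : ℝ) * ‖Sig ξ‖ ^ 2 := by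
      rw [Finset.sum_congr rfl fun t ht => by rw [hinv t ht ξ]]
      rw [Finset.sum_const, nsmul_eq_mul]
    have hle : ∑ t ∈ T, ‖Sig (ξ * t)‖ ^ 2 ≤ ∑ t : F, ‖Sig (ξ * t)‖ ^ 2 :=
      Finset.sum_le_sum_of_subset_of_nonneg (Finset.subset_univ T)
        (fun _ _ _ => by positivity)
    have hre : ∑ t : F, ‖Sig (ξ * t)‖ ^ 2 = ∑ u : F, ‖Sig u‖ ^ 2 :=
      Equiv.sum_comp (Equiv.mulLeft₀ ξ hξ) (fun u => ‖Sig u‖ ^ 2)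
    rw [← hTsum, ← htotal, ← hre]
    exact hle
  have hcard : (0:ℝ) < T.card := by exact_mod_cast Finset.card_pos.2 hTne
  calc ‖Sig ξ‖ ^ 2 = ((T.card : ℝ) * ‖Sig ξ‖ ^ 2) / T.card := by field_simp
    _ ≤ ((Fintype.card F : ℝ) * T.card) / T.card := by
        exact div_le_div_of_nonneg_right havg hcard.le |>.trans_eq rfl
    _ = (Fintype.card F : ℝ) := by field_simp

lemma sum_rot (X : F → F → F → F → ℂ) :
    ∑ ξ : F, ∑ a : F, ∑ b : F, ∑ x : F, X ξ a b x
      = ∑ a : F, ∑ b : F, ∑ x : F, ∑ ξ : F, X ξ a b x := by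
  rw [Finset.sum_comm]
  refine Finset.sum_congr rfl fun a _ => ?_
  rw [Finset.sum_comm]
  refine Finset.sum_congr rfl fun b _ => ?_
  exact Finset.sum_comm

omit [Field F] [DecidableEq F] in
lemma triple_sum_mul (u v w : F → ℂ) :
    (∑ a : F, u a) * (∑ b : F, v b) * (∑ x : F, w x)
      = ∑ a : F, ∑ b : F, ∑ x : F, u a * v b * w x := by
  rw [Finset.sum_mul_sum]
  rw [Finset.sum_mul]
  refine Finset.sum_congr rfl fun a _ => ?_
  rw [Finset.sum_mul]
  refine Finset.sum_congr rfl fun b _ => ?_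
  rw [Finset.mul_sum]

lemma conv_bound (ψ : AddChar F ℂ)
    (hψ : ∀ b : F, ∑ x : F, ψ (x * b) = if b = 0 then (Fintype.card F : ℂ) else 0)
    (s : F → ℝ) (hs0 : ∑ x : F, s x = 0)
    (K : ℝ) (hK0 : 0 ≤ K)
    (hK : ∀ ξ : F, ξ ≠ 0 → ‖∑ x : F, (s x : ℂ) * ψ (ξ * x)‖ ≤ K)
    (g h : F → ℝ) (hg : ∀ a, |g a| ≤ 1) (hh : ∀ b, |h b| ≤ 1) :
    |∑ a : F, ∑ b : F, g a * h b * s (a - b)| ≤ K * (Fintype.card F : ℝ) := by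
  have hq : (0:ℝ) < (Fintype.card F : ℝ) := by exact_mod_cast Fintype.card_pos
  set G : F → ℂ := fun ξ => ∑ a : F, (g a : ℂ) * ψ (ξ * a) with hG
  set H : F → ℂ := fun ξ => ∑ b : F, (h b : ℂ) * ψ (ξ * (-b)) with hH
  set S : F → ℂ := fun ξ => ∑ x : F, (s x : ℂ) * ψ (ξ * (-x)) with hS
  have key : ∑ ξ : F, G ξ * H ξ * S ξ
      = (Fintype.card F : ℂ) * ∑ a : F, ∑ b : F, ((g a * h b * s (a - b) : ℝ) : ℂ) := by
    have expand : ∀ ξ : F, G ξ * H ξ * S ξ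
        = ∑ a : F, ∑ b : F, ∑ x : F,
            (g a : ℂ) * (h b : ℂ) * (s x : ℂ) * ψ ((a - b - x) * ξ) := by
      intro ξ
      simp only [hG, hH, hS]
      rw [triple_sum_mul]
      refine Finset.sum_congr rfl fun a _ => Finset.sum_congr rfl fun b _ =>
        Finset.sum_congr rfl fun x _ => ?_
      have harg : ψ (ξ * a) * ψ (ξ * (-b)) * ψ (ξ * (-x)) = ψ ((a - b - x) * ξ) := by
        rw [← AddChar.map_add_eq_mul, ← AddChar.map_add_eq_mul]
        congr 1
        ring
      calc (g a : ℂ) * ψ (ξ * a) * ((h b : ℂ) * ψ (ξ * (-b))) * ((s x : ℂ) * ψ (ξ * (-x)))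
          = (g a : ℂ) * (h b : ℂ) * (s x : ℂ) * (ψ (ξ * a) * ψ (ξ * (-b)) * ψ (ξ * (-x))) := by
            ring
        _ = _ := by rw [harg]
    simp_rw [expand]
    rw [sum_rot]
    have inner : ∀ a b : F, ∑ x : F, ∑ ξ : F,
        (g a : ℂ) * (h b : ℂ) * (s x : ℂ) * ψ ((a - b - x) * ξ)
        = (Fintype.card F : ℂ) * ((g a * h b * s (a - b) : ℝ) : ℂ) := by
      intro a b
      have hx : ∀ x : F, ∑ ξ : F, (g a : ℂ) * (h b : ℂ) * (s x : ℂ) * ψ ((a - b - x) * ξ)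
          = (g a : ℂ) * (h b : ℂ) * (s x : ℂ) *
              (if a - b - x = 0 then (Fintype.card F : ℂ) else 0) := by
        intro x
        rw [← hψ (a - b - x), Finset.mul_sum]
        refine Finset.sum_congr rfl fun ξ _ => ?_
        congr 2
        ring
      have hcond : ∀ x : F, (a - b - x = 0) = (x = a - b) := by
        intro x
        refine propext ⟨fun hh => ?_, fun hh => by rw [hh]; ring⟩
        have : a - b = x := by linear_combination hh
        exact this.symm
      have hx2 : ∀ x : F, (g a : ℂ) * (h b : ℂ) * (s x : ℂ) *
            (if x = a - b then (Fintype.card F : ℂ) else 0)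
          = if x = a - b then
              (g a : ℂ) * (h b : ℂ) * (s x : ℂ) * (Fintype.card F : ℂ) else 0 := by
        intro x
        by_cases hcase : x = a - b
        · simp [hcase]
        · simp [hcase]
      simp_rw [hx, hcond, hx2]
      rw [Finset.sum_ite_eq' Finset.univ (a - b)
        (fun x => (g a : ℂ) * (h b : ℂ) * (s x : ℂ) * (Fintype.card F : ℂ))]
      simp only [Finset.mem_univ, if_true]
      push_cast
      ring
    simp_rw [inner]
    simp_rw [← Finset.mul_sum]
  -- Parseval bounds
  have hGsum : ∑ ξ : F, ‖G ξ‖ ^ 2 ≤ (Fintype.card F : ℝ) * (Fintype.card F : ℝ) := by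
    have hp := parseval ψ hψ id Function.injective_id (fun a => (g a : ℂ))
    simp only [id] at hp
    rw [hG]
    rw [hp]
    refine mul_le_mul_of_nonneg_left ?_ hq.le
    have hb : ∀ a : F, ‖(g a : ℂ)‖ ^ 2 ≤ 1 := by
      intro a
      have : ‖(g a : ℂ)‖ = |g a| := by
        rw [Complex.norm_real, Real.norm_eq_abs]
      rw [this]
      calc |g a| ^ 2 ≤ 1 ^ 2 := pow_le_pow_left₀ (abs_nonneg _) (hg a) 2
        _ = 1 := one_pow 2
    calc ∑ a : F, ‖(g a : ℂ)‖ ^ 2 ≤ ∑ _a : F, (1:ℝ) := Finset.sum_le_sum fun a _ => hb a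
      _ = (Fintype.card F : ℝ) := by simp
  have hHsum : ∑ ξ : F, ‖H ξ‖ ^ 2 ≤ (Fintype.card F : ℝ) * (Fintype.card F : ℝ) := by
    have hp := parseval ψ hψ (fun b => -b) (fun x y hxy => neg_injective hxy)
      (fun b => (h b : ℂ))
    rw [hH]
    rw [hp]
    refine mul_le_mul_of_nonneg_left ?_ hq.le
    have hb : ∀ b : F, ‖(h b : ℂ)‖ ^ 2 ≤ 1 := by
      intro b
      have : ‖(h b : ℂ)‖ = |h b| := by
        rw [Complex.norm_real, Real.norm_eq_abs]
      rw [this]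
      calc |h b| ^ 2 ≤ 1 ^ 2 := pow_le_pow_left₀ (abs_nonneg _) (hh b) 2
        _ = 1 := one_pow 2
    calc ∑ b : F, ‖(h b : ℂ)‖ ^ 2 ≤ ∑ _b : F, (1:ℝ) := Finset.sum_le_sum fun b _ => hb b
      _ = (Fintype.card F : ℝ) := by simp
  have hSb : ∀ ξ : F, ‖S ξ‖ ≤ K := by
    intro ξ
    by_cases hz : ξ = 0
    · have : S ξ = 0 := by
        rw [hS, hz]
        have : ∀ x : F, ((s x : ℂ)) * ψ ((0:F) * (-x)) = (s x : ℂ) := by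
          intro x
          rw [zero_mul, AddChar.map_zero_eq_one, mul_one]
        simp_rw [this]
        rw [← Complex.ofReal_sum, hs0, Complex.ofReal_zero]
      rw [this, norm_zero]
      exact hK0
    · have heq : S ξ = ∑ x : F, (s x : ℂ) * ψ ((-ξ) * x) := by
        rw [hS]
        refine Finset.sum_congr rfl fun x _ => ?_
        congr 2
        ring
      rw [heq]
      exact hK (-ξ) (neg_ne_zero.2 hz)
  -- combine
  have hcs : ∑ ξ : F, ‖G ξ‖ * ‖H ξ‖ ≤ (Fintype.card F : ℝ) * (Fintype.card F : ℝ) := by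
    have h2 := Finset.sum_mul_sq_le_sq_mul_sq Finset.univ (fun ξ : F => ‖G ξ‖)
      (fun ξ : F => ‖H ξ‖)
    have hpos : (0:ℝ) ≤ ∑ ξ : F, ‖G ξ‖ * ‖H ξ‖ :=
      Finset.sum_nonneg fun ξ _ => mul_nonneg (norm_nonneg _) (norm_nonneg _)
    nlinarith [hGsum, hHsum, Finset.sum_nonneg (fun ξ (_ : ξ ∈ Finset.univ) =>
      sq_nonneg ‖G ξ‖), Finset.sum_nonneg (fun ξ (_ : ξ ∈ Finset.univ) => sq_nonneg ‖H ξ‖),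
      sq_nonneg (∑ ξ : F, ‖G ξ‖ * ‖H ξ‖ - (Fintype.card F : ℝ) * (Fintype.card F : ℝ))]
  have hnorm : ‖∑ ξ : F, G ξ * H ξ * S ξ‖ ≤
      K * ((Fintype.card F : ℝ) * (Fintype.card F : ℝ)) := by
    refine (norm_sum_le _ _).trans ?_
    have pt : ∀ ξ : F, ‖G ξ * H ξ * S ξ‖ ≤ ‖G ξ‖ * ‖H ξ‖ * K := by
      intro ξ
      rw [norm_mul, norm_mul]
      exact mul_le_mul_of_nonneg_left (hSb ξ) (by positivity)
    refine (Finset.sum_le_sum fun ξ _ => pt ξ).trans ?_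
    rw [← Finset.sum_mul]
    calc (∑ ξ : F, ‖G ξ‖ * ‖H ξ‖) * K
        ≤ ((Fintype.card F : ℝ) * (Fintype.card F : ℝ)) * K :=
          mul_le_mul_of_nonneg_right hcs hK0
      _ = K * ((Fintype.card F : ℝ) * (Fintype.card F : ℝ)) := by ring
  have hcollapse : ∑ a : F, ∑ b : F, ((g a * h b * s (a - b) : ℝ) : ℂ)
      = ((∑ a : F, ∑ b : F, g a * h b * s (a - b) : ℝ) : ℂ) := by
    push_cast
    rfl
  rw [hcollapse] at key
  rw [key] at hnorm
  rw [norm_mul] at hnorm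
  have hn1 : ‖(Fintype.card F : ℂ)‖ = (Fintype.card F : ℝ) := by
    simp
  have hn2 : ‖((∑ a : F, ∑ b : F, g a * h b * s (a - b) : ℝ) : ℂ)‖
      = |∑ a : F, ∑ b : F, g a * h b * s (a - b)| := by
    rw [Complex.norm_real, Real.norm_eq_abs]
  rw [hn1, hn2] at hnorm
  nlinarith [hnorm, hq, abs_nonneg (∑ a : F, ∑ b : F, g a * h b * s (a - b))]

lemma subgroup_finset (A : Subgroup Fˣ) :
    ∃ T : Finset F,
      (∀ x : F, x ∈ T ↔ ∃ u ∈ A, (u : F) = x) ∧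
      T.card = Nat.card A ∧ (0:F) ∉ T ∧ T.Nonempty ∧
      (∀ t ∈ T, Finset.image (fun a => t * a) T = T) := by
  classical
  refine ⟨Finset.univ.filter (fun x => ∃ u ∈ A, (u : F) = x), fun x => by
    simp [Finset.mem_filter], ?_, ?_, ?_, ?_⟩
  · -- card
    have hT : Finset.univ.filter (fun x : F => ∃ u ∈ A, (u : F) = x)
        = Finset.image (fun u : A => ((u : Fˣ) : F)) Finset.univ := by
      ext x
      simp only [Finset.mem_filter, Finset.mem_univ, true_and, Finset.mem_image]
      constructor
      · rintro ⟨u, hu, rfl⟩; exact ⟨⟨u, hu⟩, rfl⟩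
      · rintro ⟨⟨u, hu⟩, rfl⟩; exact ⟨u, hu, rfl⟩
    rw [hT, Finset.card_image_of_injective _
      (fun u v huv => Subtype.ext (Units.ext huv)), Finset.card_univ,
      Nat.card_eq_fintype_card]
  · simp only [Finset.mem_filter, Finset.mem_univ, true_and, not_exists]
    rintro u ⟨-, hu⟩
    exact Units.ne_zero u hu
  · refine ⟨(1:F), ?_⟩
    simp only [Finset.mem_filter, Finset.mem_univ, true_and]
    exact ⟨1, A.one_mem, Units.val_one⟩
  · intro t ht
    simp only [Finset.mem_filter, Finset.mem_univ, true_and] at ht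
    obtain ⟨u₀, hu₀, rfl⟩ := ht
    ext x
    simp only [Finset.mem_image, Finset.mem_filter, Finset.mem_univ, true_and]
    constructor
    · rintro ⟨a, ⟨u, hu, rfl⟩, rfl⟩
      exact ⟨u₀ * u, A.mul_mem hu₀ hu, by push_cast; ring⟩
    · rintro ⟨u, hu, rfl⟩
      refine ⟨((u₀⁻¹ * u : Fˣ) : F), ⟨u₀⁻¹ * u, A.mul_mem (A.inv_mem hu₀) hu, rfl⟩, ?_⟩
      push_cast
      field_simp

theorem stmt_9 :
    ∃ C : ℝ, 0 < C ∧
      ∀ (F : Type) [Field F] [Fintype F],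
        ∀ A : Subgroup Fˣ,
          (Fintype.card F : ℝ) ^ ((2 : ℝ) / 3) ≤ (Nat.card A : ℝ) →
          ∀ σ : F → ℝ,
            (∀ x : F, (∃ u ∈ A, (u : F) = x) →
              σ x = (Fintype.card F : ℝ) / (Nat.card A : ℝ)) →
            (∀ x : F, (¬∃ u ∈ A, (u : F) = x) → σ x = 0) →
            ∀ f₁ f₂ f₃ f₄ : F × F → ℝ,
              (∀ x, f₁ x ∈ Set.Icc (-1 : ℝ) 1) →
              (∀ x, f₂ x ∈ Set.Icc (-1 : ℝ) 1) →
              (∀ x, f₃ x ∈ Set.Icc (-1 : ℝ) 1) →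
              (∀ x, f₄ x ∈ Set.Icc (-1 : ℝ) 1) →
              |Nform f₁ f₂ f₃ f₄ σ| ≤
                min (min (boxNorm f₁) (boxNorm f₂)) (min (boxNorm f₃) (boxNorm f₄)) +
                  C * (Fintype.card F : ℝ) ^ ((1 : ℝ) / 8) /
                    (Nat.card A : ℝ) ^ ((1 : ℝ) / 4) := by
  refine ⟨4, by norm_num, ?_⟩
  intro F _ _ A hA σ hσ1 hσ2 f₁ f₂ f₃ f₄ hf₁ hf₂ hf₃ hf₄
  classical
  obtain ⟨T, hTmem, hTcard, hT0, hTne, hTmul⟩ := subgroup_finset A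
  obtain ⟨ψ, hψ⟩ := exists_char F
  set q : ℝ := (Fintype.card F : ℝ) with hqdef
  set n : ℝ := (Nat.card A : ℝ) with hndef
  have hqnat : 0 < Fintype.card F := Fintype.card_pos
  have hq1 : (1:ℝ) ≤ q := by rw [hqdef]; exact_mod_cast hqnat
  have hq0 : (0:ℝ) < q := lt_of_lt_of_le zero_lt_one hq1
  have hnnat : 0 < Nat.card A := Nat.card_pos
  have hn0 : (0:ℝ) < n := by rw [hndef]; exact_mod_cast hnnat
  have hTcardR : (T.card : ℝ) = n := by rw [hndef]; exact_mod_cast hTcard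
  have hnq : n ≤ q := by
    rw [← hTcardR, hqdef]
    exact_mod_cast Finset.card_le_univ T
  have hqn1 : (1:ℝ) ≤ q / n := (one_le_div hn0).2 hnq
  -- σ as indicator
  have hσ : ∀ x : F, σ x = if x ∈ T then q / n else 0 := by
    intro x
    by_cases hx : x ∈ T
    · rw [if_pos hx]; exact hσ1 x ((hTmem x).1 hx)
    · rw [if_neg hx]; exact hσ2 x (fun h => hx ((hTmem x).2 h))
  set s : F → ℝ := fun x => σ x - 1 with hs
  have hσsum : ∑ x : F, σ x = q := by
    simp_rw [hσ]
    rw [Finset.sum_ite_mem, Finset.univ_inter, Finset.sum_const, nsmul_eq_mul, hTcardR]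
    field_simp
  have hs0 : ∑ x : F, s x = 0 := by
    simp only [hs]
    rw [Finset.sum_sub_distrib, hσsum, Finset.sum_const, Finset.card_univ, nsmul_eq_mul,
      mul_one, hqdef]
    ring
  -- bound on the Fourier transform of s
  set K : ℝ := (q / n) * Real.sqrt q with hK
  have hK0 : 0 ≤ K := mul_nonneg (by positivity) (Real.sqrt_nonneg q)
  have hKb : ∀ ξ : F, ξ ≠ 0 → ‖∑ x : F, ((s x : ℝ) : ℂ) * ψ (ξ * x)‖ ≤ K := by
    intro ξ hξ
    have hTsum : ∑ x ∈ T, ψ (ξ * x) = ∑ x : F, (if x ∈ T then (1:ℂ) else 0) * ψ (ξ * x) := by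
      simp only [ite_mul, one_mul, zero_mul]
      rw [Finset.sum_ite_mem, Finset.univ_inter]
    have hsplit : ∑ x : F, ((s x : ℝ) : ℂ) * ψ (ξ * x)
        = ((q / n : ℝ) : ℂ) * ∑ x ∈ T, ψ (ξ * x) - ∑ x : F, ψ (ξ * x) := by
      rw [hTsum, Finset.mul_sum, ← Finset.sum_sub_distrib]
      refine Finset.sum_congr rfl fun x _ => ?_
      by_cases hx : x ∈ T
      · rw [if_pos hx]
        have : s x = q / n - 1 := by simp only [hs, hσ x, if_pos hx]
        rw [this]
        push_cast
        ring
      · rw [if_neg hx]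
        have : s x = -1 := by simp only [hs, hσ x, if_neg hx]; ring
        rw [this]
        push_cast
        ring
    have hzero : ∑ x : F, ψ (ξ * x) = 0 := by
      have hcomm : ∑ x : F, ψ (ξ * x) = ∑ x : F, ψ (x * ξ) :=
        Finset.sum_congr rfl fun x _ => by rw [mul_comm]
      rw [hcomm, hψ ξ, if_neg hξ]
    rw [hsplit, hzero, sub_zero, norm_mul]
    have hnorm1 : ‖((q / n : ℝ) : ℂ)‖ = q / n := by
      rw [Complex.norm_real, Real.norm_eq_abs]
      exact abs_of_nonneg (by positivity)
    rw [hnorm1, hK]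
    refine mul_le_mul_of_nonneg_left ?_ (by positivity)
    have hg := gauss_bound ψ hψ T hT0 hTne hTmul ξ hξ
    calc ‖∑ x ∈ T, ψ (ξ * x)‖ = Real.sqrt (‖∑ x ∈ T, ψ (ξ * x)‖ ^ 2) := by
          rw [Real.sqrt_sq (norm_nonneg _)]
      _ ≤ Real.sqrt q := Real.sqrt_le_sqrt hg
  -- pointwise bounds
  have hb₁ : ∀ p, |f₁ p| ≤ 1 := fun p => abs_le.2 ⟨(hf₁ p).1, (hf₁ p).2⟩
  have hb₂ : ∀ p, |f₂ p| ≤ 1 := fun p => abs_le.2 ⟨(hf₂ p).1, (hf₂ p).2⟩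
  have hb₃ : ∀ p, |f₃ p| ≤ 1 := fun p => abs_le.2 ⟨(hf₃ p).1, (hf₃ p).2⟩
  have hb₄ : ∀ p, |f₄ p| ≤ 1 := fun p => abs_le.2 ⟨(hf₄ p).1, (hf₄ p).2⟩
  have hmul2 : ∀ x y : ℝ, |x| ≤ 1 → |y| ≤ 1 → |x * y| ≤ 1 := by
    intro x y hx hy
    rw [abs_mul]
    exact mul_le_one₀ hx (abs_nonneg _) hy
  -- sum of |s|
  have hssum : ∑ x : F, |s x| ≤ 2 * q := by
    have hsplit := Finset.sum_add_sum_compl T (fun x => |s x|)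
    have honT : ∑ x ∈ T, |s x| ≤ q := by
      have hval : ∀ x ∈ T, |s x| = q / n - 1 := by
        intro x hx
        have : s x = q / n - 1 := by simp only [hs, hσ x, if_pos hx]
        rw [this]
        exact abs_of_nonneg (by linarith)
      rw [Finset.sum_congr rfl hval, Finset.sum_const, nsmul_eq_mul, hTcardR]
      have : n * (q / n - 1) = q - n := by field_simp
      rw [this]
      linarith
    have hoffT : ∑ x ∈ Tᶜ, |s x| ≤ q := by
      have hval : ∀ x ∈ Tᶜ, |s x| = 1 := by
        intro x hx
        rw [Finset.mem_compl] at hx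
        have : s x = -1 := by simp only [hs, hσ x, if_neg hx]; ring
        rw [this]
        norm_num
      rw [Finset.sum_congr rfl hval, Finset.sum_const, nsmul_eq_mul, mul_one]
      rw [hqdef]
      exact_mod_cast Finset.card_le_univ Tᶜ
    linarith
  have hsd : ∑ c : F, ∑ d : F, |s (c - d)| ≤ q * (2 * q) := by
    have hrow : ∀ c : F, ∑ d : F, |s (c - d)| = ∑ x : F, |s x| := by
      intro c
      exact Equiv.sum_comp (Equiv.subLeft c) (fun x => |s x|)
    simp_rw [hrow]
    rw [Finset.sum_const, Finset.card_univ, nsmul_eq_mul]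
    exact mul_le_mul_of_nonneg_left hssum hq0.le
  -- error terms
  have hE1 : |∑ a : F, ∑ b : F, ∑ c : F, ∑ d : F,
      f₁ (a, c) * f₂ (a, d) * f₃ (b, c) * f₄ (b, d) * s (a - b)| ≤ q * q * (K * q) := by
    rw [sum4_swap (fun a b c d => f₁ (a, c) * f₂ (a, d) * f₃ (b, c) * f₄ (b, d) * s (a - b))]
    refine (Finset.abs_sum_le_sum_abs _ _).trans ?_
    have hcd : ∀ c d : F, |∑ a : F, ∑ b : F,
        f₁ (a, c) * f₂ (a, d) * f₃ (b, c) * f₄ (b, d) * s (a - b)| ≤ K * q := by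
      intro c d
      have heq : ∑ a : F, ∑ b : F, f₁ (a, c) * f₂ (a, d) * f₃ (b, c) * f₄ (b, d) * s (a - b)
          = ∑ a : F, ∑ b : F,
            (f₁ (a, c) * f₂ (a, d)) * (f₃ (b, c) * f₄ (b, d)) * s (a - b) :=
        Finset.sum_congr rfl fun a _ => Finset.sum_congr rfl fun b _ => by ring
      rw [heq]
      exact conv_bound ψ hψ s hs0 K hK0 hKb _ _
        (fun a => hmul2 _ _ (hb₁ _) (hb₂ _)) (fun b => hmul2 _ _ (hb₃ _) (hb₄ _))
    calc ∑ c : F, |∑ d : F, ∑ a : F, ∑ b : F,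
          f₁ (a, c) * f₂ (a, d) * f₃ (b, c) * f₄ (b, d) * s (a - b)|
        ≤ ∑ c : F, ∑ d : F, |∑ a : F, ∑ b : F,
            f₁ (a, c) * f₂ (a, d) * f₃ (b, c) * f₄ (b, d) * s (a - b)| :=
          Finset.sum_le_sum fun c _ => Finset.abs_sum_le_sum_abs _ _
      _ ≤ ∑ _c : F, ∑ _d : F, (K * q) :=
          Finset.sum_le_sum fun c _ => Finset.sum_le_sum fun d _ => hcd c d
      _ = q * q * (K * q) := by
          rw [Finset.sum_const, Finset.sum_const, Finset.card_univ, nsmul_eq_mul,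
            nsmul_eq_mul, hqdef]
          ring
  have hE2 : |∑ a : F, ∑ b : F, ∑ c : F, ∑ d : F,
      f₁ (a, c) * f₂ (a, d) * f₃ (b, c) * f₄ (b, d) * s (c - d)| ≤ q * q * (K * q) := by
    refine (Finset.abs_sum_le_sum_abs _ _).trans ?_
    have hab : ∀ a b : F, |∑ c : F, ∑ d : F,
        f₁ (a, c) * f₂ (a, d) * f₃ (b, c) * f₄ (b, d) * s (c - d)| ≤ K * q := by
      intro a b
      have heq : ∑ c : F, ∑ d : F, f₁ (a, c) * f₂ (a, d) * f₃ (b, c) * f₄ (b, d) * s (c - d)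
          = ∑ c : F, ∑ d : F,
            (f₁ (a, c) * f₃ (b, c)) * (f₂ (a, d) * f₄ (b, d)) * s (c - d) :=
        Finset.sum_congr rfl fun c _ => Finset.sum_congr rfl fun d _ => by ring
      rw [heq]
      exact conv_bound ψ hψ s hs0 K hK0 hKb _ _
        (fun c => hmul2 _ _ (hb₁ _) (hb₃ _)) (fun d => hmul2 _ _ (hb₂ _) (hb₄ _))
    calc ∑ a : F, |∑ b : F, ∑ c : F, ∑ d : F,
          f₁ (a, c) * f₂ (a, d) * f₃ (b, c) * f₄ (b, d) * s (c - d)|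
        ≤ ∑ a : F, ∑ b : F, |∑ c : F, ∑ d : F,
            f₁ (a, c) * f₂ (a, d) * f₃ (b, c) * f₄ (b, d) * s (c - d)| :=
          Finset.sum_le_sum fun a _ => Finset.abs_sum_le_sum_abs _ _
      _ ≤ ∑ _a : F, ∑ _b : F, (K * q) :=
          Finset.sum_le_sum fun a _ => Finset.sum_le_sum fun b _ => hab a b
      _ = q * q * (K * q) := by
          rw [Finset.sum_const, Finset.sum_const, Finset.card_univ, nsmul_eq_mul,
            nsmul_eq_mul, hqdef]
          ring
  have hE3 : |∑ a : F, ∑ b : F, ∑ c : F, ∑ d : F,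
      f₁ (a, c) * f₂ (a, d) * f₃ (b, c) * f₄ (b, d) * s (a - b) * s (c - d)|
      ≤ (K * q) * (q * (2 * q)) := by
    rw [sum4_swap (fun a b c d =>
      f₁ (a, c) * f₂ (a, d) * f₃ (b, c) * f₄ (b, d) * s (a - b) * s (c - d))]
    refine (Finset.abs_sum_le_sum_abs _ _).trans ?_
    have hcd : ∀ c d : F, |∑ a : F, ∑ b : F,
        f₁ (a, c) * f₂ (a, d) * f₃ (b, c) * f₄ (b, d) * s (a - b) * s (c - d)|
        ≤ (K * q) * |s (c - d)| := by
      intro c d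
      have heq : ∑ a : F, ∑ b : F,
          f₁ (a, c) * f₂ (a, d) * f₃ (b, c) * f₄ (b, d) * s (a - b) * s (c - d)
          = (∑ a : F, ∑ b : F,
              (f₁ (a, c) * f₂ (a, d)) * (f₃ (b, c) * f₄ (b, d)) * s (a - b)) * s (c - d) := by
        rw [Finset.sum_mul]
        refine Finset.sum_congr rfl fun a _ => ?_
        rw [Finset.sum_mul]
        exact Finset.sum_congr rfl fun b _ => by ring
      rw [heq, abs_mul]
      refine mul_le_mul_of_nonneg_right ?_ (abs_nonneg _)
      exact conv_bound ψ hψ s hs0 K hK0 hKb _ _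
        (fun a => hmul2 _ _ (hb₁ _) (hb₂ _)) (fun b => hmul2 _ _ (hb₃ _) (hb₄ _))
    calc ∑ c : F, |∑ d : F, ∑ a : F, ∑ b : F,
          f₁ (a, c) * f₂ (a, d) * f₃ (b, c) * f₄ (b, d) * s (a - b) * s (c - d)|
        ≤ ∑ c : F, ∑ d : F, |∑ a : F, ∑ b : F,
            f₁ (a, c) * f₂ (a, d) * f₃ (b, c) * f₄ (b, d) * s (a - b) * s (c - d)| :=
          Finset.sum_le_sum fun c _ => Finset.abs_sum_le_sum_abs _ _
      _ ≤ ∑ c : F, ∑ d : F, (K * q) * |s (c - d)| :=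
          Finset.sum_le_sum fun c _ => Finset.sum_le_sum fun d _ => hcd c d
      _ = (K * q) * ∑ c : F, ∑ d : F, |s (c - d)| := by
          simp_rw [← Finset.mul_sum]
      _ ≤ (K * q) * (q * (2 * q)) :=
          mul_le_mul_of_nonneg_left hsd (by positivity)
  -- decomposition
  have hsum_split : (∑ a : F, ∑ b : F, ∑ c : F, ∑ d : F,
      f₁ (a, c) * f₂ (a, d) * f₃ (b, c) * f₄ (b, d) * σ (a - b) * σ (c - d))
      = (∑ a : F, ∑ b : F, ∑ c : F, ∑ d : F,
          f₁ (a, c) * f₂ (a, d) * f₃ (b, c) * f₄ (b, d))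
        + ((∑ a : F, ∑ b : F, ∑ c : F, ∑ d : F,
            f₁ (a, c) * f₂ (a, d) * f₃ (b, c) * f₄ (b, d) * s (a - b))
          + (∑ a : F, ∑ b : F, ∑ c : F, ∑ d : F,
            f₁ (a, c) * f₂ (a, d) * f₃ (b, c) * f₄ (b, d) * s (c - d))
          + (∑ a : F, ∑ b : F, ∑ c : F, ∑ d : F,
            f₁ (a, c) * f₂ (a, d) * f₃ (b, c) * f₄ (b, d) * s (a - b) * s (c - d))) := by
    have hpt : ∀ a b c d : F,
        f₁ (a, c) * f₂ (a, d) * f₃ (b, c) * f₄ (b, d) * σ (a - b) * σ (c - d)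
        = f₁ (a, c) * f₂ (a, d) * f₃ (b, c) * f₄ (b, d)
          + (f₁ (a, c) * f₂ (a, d) * f₃ (b, c) * f₄ (b, d) * s (a - b)
            + f₁ (a, c) * f₂ (a, d) * f₃ (b, c) * f₄ (b, d) * s (c - d)
            + f₁ (a, c) * f₂ (a, d) * f₃ (b, c) * f₄ (b, d) * s (a - b) * s (c - d)) := by
      intro a b c d
      have h1 : σ (a - b) = 1 + s (a - b) := by simp [hs]
      have h2 : σ (c - d) = 1 + s (c - d) := by simp [hs]
      rw [h1, h2]
      ring
    simp_rw [hpt, Finset.sum_add_distrib]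
  have hNform : Nform f₁ f₂ f₃ f₄ σ = Mform f₁ f₂ f₃ f₄
      + ((∑ a : F, ∑ b : F, ∑ c : F, ∑ d : F,
            f₁ (a, c) * f₂ (a, d) * f₃ (b, c) * f₄ (b, d) * s (a - b))
          + (∑ a : F, ∑ b : F, ∑ c : F, ∑ d : F,
            f₁ (a, c) * f₂ (a, d) * f₃ (b, c) * f₄ (b, d) * s (c - d))
          + (∑ a : F, ∑ b : F, ∑ c : F, ∑ d : F,
            f₁ (a, c) * f₂ (a, d) * f₃ (b, c) * f₄ (b, d) * s (a - b) * s (c - d)))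
          / (Fintype.card F : ℝ) ^ 4 := by
    rw [Nform, Mform, hsum_split, add_div]
  -- the box-norm bound
  have hboxmin : |Mform f₁ f₂ f₃ f₄| ≤
      min (min (boxNorm f₁) (boxNorm f₂)) (min (boxNorm f₃) (boxNorm f₄)) := by
    have hM := abs_Mform_le hqnat f₁ f₂ f₃ f₄
    have n₁ := boxNorm_nonneg f₁
    have n₂ := boxNorm_nonneg f₂
    have n₃ := boxNorm_nonneg f₃
    have n₄ := boxNorm_nonneg f₄
    have u₁ := boxNorm_le_one f₁ hf₁
    have u₂ := boxNorm_le_one f₂ hf₂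
    have u₃ := boxNorm_le_one f₃ hf₃
    have u₄ := boxNorm_le_one f₄ hf₄
    have haux : ∀ x y z w : ℝ, 0 ≤ x → 0 ≤ y → 0 ≤ z → 0 ≤ w →
        y ≤ 1 → z ≤ 1 → w ≤ 1 → x * (y * z * w) ≤ x := by
      intro x y z w hx hy hz hw hy1 hz1 hw1
      have h : y * z * w ≤ 1 := mul_le_one₀ (mul_le_one₀ hy1 hz hz1) hw hw1
      calc x * (y * z * w) ≤ x * 1 := mul_le_mul_of_nonneg_left h hx
        _ = x := mul_one x
    refine hM.trans (le_min (le_min ?_ ?_) (le_min ?_ ?_))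
    · calc boxNorm f₁ * boxNorm f₂ * boxNorm f₃ * boxNorm f₄
          = boxNorm f₁ * (boxNorm f₂ * boxNorm f₃ * boxNorm f₄) := by ring
        _ ≤ boxNorm f₁ := haux _ _ _ _ n₁ n₂ n₃ n₄ u₂ u₃ u₄
    · calc boxNorm f₁ * boxNorm f₂ * boxNorm f₃ * boxNorm f₄
          = boxNorm f₂ * (boxNorm f₁ * boxNorm f₃ * boxNorm f₄) := by ring
        _ ≤ boxNorm f₂ := haux _ _ _ _ n₂ n₁ n₃ n₄ u₁ u₃ u₄
    · calc boxNorm f₁ * boxNorm f₂ * boxNorm f₃ * boxNorm f₄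
          = boxNorm f₃ * (boxNorm f₁ * boxNorm f₂ * boxNorm f₄) := by ring
        _ ≤ boxNorm f₃ := haux _ _ _ _ n₃ n₁ n₂ n₄ u₁ u₂ u₄
    · calc boxNorm f₁ * boxNorm f₂ * boxNorm f₃ * boxNorm f₄
          = boxNorm f₄ * (boxNorm f₁ * boxNorm f₂ * boxNorm f₃) := by ring
        _ ≤ boxNorm f₄ := haux _ _ _ _ n₄ n₁ n₂ n₃ u₁ u₂ u₃
  -- total error
  have hq4 : (0:ℝ) < (Fintype.card F : ℝ) ^ 4 := by positivity
  have hq4q : ((Fintype.card F : ℝ)) ^ 4 = q ^ 4 := by rw [hqdef]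
  have hEtot : |((∑ a : F, ∑ b : F, ∑ c : F, ∑ d : F,
            f₁ (a, c) * f₂ (a, d) * f₃ (b, c) * f₄ (b, d) * s (a - b))
          + (∑ a : F, ∑ b : F, ∑ c : F, ∑ d : F,
            f₁ (a, c) * f₂ (a, d) * f₃ (b, c) * f₄ (b, d) * s (c - d))
          + (∑ a : F, ∑ b : F, ∑ c : F, ∑ d : F,
            f₁ (a, c) * f₂ (a, d) * f₃ (b, c) * f₄ (b, d) * s (a - b) * s (c - d)))|
      ≤ 4 * K * q ^ 3 := by
    refine (abs_add_le _ _).trans ?_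
    have := (abs_add_le (∑ a : F, ∑ b : F, ∑ c : F, ∑ d : F,
            f₁ (a, c) * f₂ (a, d) * f₃ (b, c) * f₄ (b, d) * s (a - b))
          (∑ a : F, ∑ b : F, ∑ c : F, ∑ d : F,
            f₁ (a, c) * f₂ (a, d) * f₃ (b, c) * f₄ (b, d) * s (c - d)))
    nlinarith [hE1, hE2, hE3]
  have herr : |Nform f₁ f₂ f₃ f₄ σ| ≤ |Mform f₁ f₂ f₃ f₄| + 4 * Real.sqrt q / n := by
    rw [hNform]
    refine (abs_add_le _ _).trans ?_
    refine add_le_add le_rfl ?_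
    rw [abs_div, abs_of_pos hq4, hq4q]
    have hdiv : (4 * K * q ^ 3) / q ^ 4 = 4 * Real.sqrt q / n := by
      rw [hK]
      field_simp
    rw [← hdiv]
    exact div_le_div_of_nonneg_right hEtot (by positivity)
  have hsq : Real.sqrt q = q ^ ((1:ℝ)/2) := Real.sqrt_eq_rpow q
  have hfin : 4 * Real.sqrt q / n ≤ 4 * q ^ ((1:ℝ)/8) / n ^ ((1:ℝ)/4) := by
    have hsqpos : 0 < Real.sqrt q := Real.sqrt_pos.2 hq0
    have hε0 : 0 < Real.sqrt q / n := div_pos hsqpos hn0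
    have hε1 : Real.sqrt q / n ≤ 1 := by
      rw [div_le_one hn0]
      calc Real.sqrt q = q ^ ((1:ℝ)/2) := hsq
        _ ≤ q ^ ((2:ℝ)/3) := Real.rpow_le_rpow_of_exponent_le hq1 (by norm_num)
        _ ≤ n := hA
    have hmono : Real.sqrt q / n ≤ (Real.sqrt q / n) ^ ((1:ℝ)/4) := by
      calc Real.sqrt q / n = (Real.sqrt q / n) ^ (1:ℝ) := (Real.rpow_one _).symm
        _ ≤ (Real.sqrt q / n) ^ ((1:ℝ)/4) :=
            Real.rpow_le_rpow_of_exponent_ge hε0 hε1 (by norm_num)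
    have hconv : (Real.sqrt q / n) ^ ((1:ℝ)/4) = q ^ ((1:ℝ)/8) / n ^ ((1:ℝ)/4) := by
      rw [Real.div_rpow (Real.sqrt_nonneg q) hn0.le, hsq, ← Real.rpow_mul hq0.le]
      norm_num
    calc 4 * Real.sqrt q / n = 4 * (Real.sqrt q / n) := by ring
      _ ≤ 4 * ((Real.sqrt q / n) ^ ((1:ℝ)/4)) := by linarith [hmono]
      _ = 4 * q ^ ((1:ℝ)/8) / n ^ ((1:ℝ)/4) := by rw [hconv]; ring
  calc |Nform f₁ f₂ f₃ f₄ σ|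
      ≤ |Mform f₁ f₂ f₃ f₄| + 4 * Real.sqrt q / n := herr
    _ ≤ min (min (boxNorm f₁) (boxNorm f₂)) (min (boxNorm f₃) (boxNorm f₄))
        + 4 * q ^ ((1:ℝ)/8) / n ^ ((1:ℝ)/4) := add_le_add hboxmin hfin
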